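/- Let w : ℝ → ℝ be twice differentiable with w''(ξ) = ξ·w(ξ) + 2·w(ξ)³, and let α ≠ 0. Define, for t < 0 and (y,x) ∈ ℝ²: ξ(x,y,t) = x·(−3t)^{−1/3} + y²·(−3t)^{−4/3}, p(t,y,x) = α·(−3t)^{−1/3}·exp(−xy/(3t) + 2y³/(27t²))·w(ξ), and r(t,y,x) = −α^{−1}·(−3t)^{−1/3}·exp(xy/(3t) − 2y³/(27t²))·w(ξ). Then p and r satisfy the scalar coupled modified KdV system: ∂_t p = ∂_x³ p + 6 p r ∂_x p and ∂_t r = ∂_x³ r + 6 r p ∂_x r. -/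

import Mathlib

lemma aux_T (f f' : ℝ → ℝ) (hf : ∀ s, HasDerivAt f (f' s) s)
    (A b c d k x : ℝ) :
    HasDerivAt (fun x => A * Real.exp (b * x + k) * f (c * x + d))
      (A * Real.exp (b * x + k) * (b * f (c * x + d) + c * f' (c * x + d))) x := by
  have hb : HasDerivAt (fun x : ℝ => b * x + k) b x := by
    simpa using ((hasDerivAt_id x).const_mul b).add_const k
  have hc : HasDerivAt (fun x : ℝ => c * x + d) c x := by
    simpa using ((hasDerivAt_id x).const_mul c).add_const d
  have he : HasDerivAt (fun x => Real.exp (b * x + k)) (Real.exp (b * x + k) * b) x :=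
    (Real.hasDerivAt_exp _).comp x hb
  have hfc : HasDerivAt (fun x => f (c * x + d)) (f' (c * x + d) * c) x :=
    (hf _).comp x hc
  have h := (he.const_mul A).mul hfc
  refine h.congr_deriv ?_
  ring

lemma aux_third (f f1 f2 f3 : ℝ → ℝ)
    (h0 : ∀ s, HasDerivAt f (f1 s) s) (h1 : ∀ s, HasDerivAt f1 (f2 s) s)
    (h2 : ∀ s, HasDerivAt f2 (f3 s) s) (A b c d k x : ℝ) :
    deriv (fun x1 => deriv (fun x2 =>
        deriv (fun x3 => A * Real.exp (b * x3 + k) * f (c * x3 + d)) x2) x1) x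
      = A * Real.exp (b * x + k) * (b ^ 3 * f (c * x + d) + 3 * b ^ 2 * c * f1 (c * x + d)
          + 3 * b * c ^ 2 * f2 (c * x + d) + c ^ 3 * f3 (c * x + d)) := by
  have e1 : (fun x2 => deriv (fun x3 => A * Real.exp (b * x3 + k) * f (c * x3 + d)) x2)
      = fun x2 => A * b * Real.exp (b * x2 + k) * f (c * x2 + d)
          + A * c * Real.exp (b * x2 + k) * f1 (c * x2 + d) := by
    funext s; rw [(aux_T f f1 h0 A b c d k s).deriv]; ring
  rw [e1]
  have e2 : (fun x1 => deriv (fun x2 => A * b * Real.exp (b * x2 + k) * f (c * x2 + d)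
          + A * c * Real.exp (b * x2 + k) * f1 (c * x2 + d)) x1)
      = fun x1 => (A * b * b) * Real.exp (b * x1 + k) * f (c * x1 + d)
          + (A * b * c + A * c * b) * Real.exp (b * x1 + k) * f1 (c * x1 + d)
          + (A * c * c) * Real.exp (b * x1 + k) * f2 (c * x1 + d) := by
    funext s
    rw [((aux_T f f1 h0 (A * b) b c d k s).fun_add (aux_T f1 f2 h1 (A * c) b c d k s)).deriv]
    ring
  rw [e2,
    (((aux_T f f1 h0 (A * b * b) b c d k x).fun_add
      (aux_T f1 f2 h1 (A * b * c + A * c * b) b c d k x)).fun_add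
      (aux_T f2 f3 h2 (A * c * c) b c d k x)).deriv]
  ring

lemma rpow_facts (t : ℝ) (ht : t < 0) :
    ((-3 * t) ^ (-(1 / 3 : ℝ))) ^ 3 = (-3 * t)⁻¹ ∧
      (-3 * t) ^ (-(4 / 3 : ℝ)) = ((-3 * t) ^ (-(1 / 3 : ℝ))) ^ 4 := by
  have hu : (0 : ℝ) < -3 * t := by linarith
  constructor
  · rw [← Real.rpow_natCast ((-3 * t) ^ (-(1 / 3 : ℝ))) 3, ← Real.rpow_mul hu.le]
    norm_num [Real.rpow_neg_one]
  · rw [← Real.rpow_natCast ((-3 * t) ^ (-(1 / 3 : ℝ))) 4, ← Real.rpow_mul hu.le]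
    norm_num

lemma hasDerivAt_G (f f1 : ℝ → ℝ) (hf : ∀ s, HasDerivAt f (f1 s) s)
    (β a1 a2 x y2 c : ℝ) :
    HasDerivAt (fun c : ℝ => β * c * Real.exp (a1 * c ^ 3 + a2 * c ^ 6) * f (x * c + y2 * c ^ 4))
      (β * Real.exp (a1 * c ^ 3 + a2 * c ^ 6) *
        ((1 + 3 * a1 * c ^ 3 + 6 * a2 * c ^ 6) * f (x * c + y2 * c ^ 4)
          + (x * c + 4 * y2 * c ^ 4) * f1 (x * c + y2 * c ^ 4))) c := by
  have h3 : HasDerivAt (fun c : ℝ => c ^ 3) (3 * c ^ 2) c := by simpa using hasDerivAt_pow 3 c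
  have h6 : HasDerivAt (fun c : ℝ => c ^ 6) (6 * c ^ 5) c := by simpa using hasDerivAt_pow 6 c
  have h4 : HasDerivAt (fun c : ℝ => c ^ 4) (4 * c ^ 3) c := by simpa using hasDerivAt_pow 4 c
  have hP : HasDerivAt (fun c : ℝ => a1 * c ^ 3 + a2 * c ^ 6)
      (a1 * (3 * c ^ 2) + a2 * (6 * c ^ 5)) c := (h3.const_mul a1).add (h6.const_mul a2)
  have hE : HasDerivAt (fun c : ℝ => Real.exp (a1 * c ^ 3 + a2 * c ^ 6))
      (Real.exp (a1 * c ^ 3 + a2 * c ^ 6) * (a1 * (3 * c ^ 2) + a2 * (6 * c ^ 5))) c :=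
    (Real.hasDerivAt_exp _).comp c hP
  have hQ : HasDerivAt (fun c : ℝ => x * c + y2 * c ^ 4) (x * 1 + y2 * (4 * c ^ 3)) c :=
    ((hasDerivAt_id c).const_mul x).add (h4.const_mul y2)
  have hwQ : HasDerivAt (fun c : ℝ => f (x * c + y2 * c ^ 4))
      (f1 (x * c + y2 * c ^ 4) * (x * 1 + y2 * (4 * c ^ 3))) c := (hf _).comp c hQ
  have hβ : HasDerivAt (fun c : ℝ => β * c) (β * 1) c := (hasDerivAt_id c).const_mul β
  have h := (hβ.fun_mul hE).fun_mul hwQ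
  refine h.congr_deriv ?_
  ring

/-- Self-similar Painlevé II solutions of the scalar coupled mKdV system. -/
theorem stmt_3 (w : ℝ → ℝ)
    (hw1 : Differentiable ℝ w) (hw2 : Differentiable ℝ (deriv w))
    (hPII : ∀ s : ℝ, deriv (deriv w) s = s * w s + 2 * (w s) ^ 3)
    (α : ℝ) (hα : α ≠ 0)
    (ξ : ℝ → ℝ → ℝ → ℝ)
    (hξ : ∀ x y t : ℝ,
      ξ x y t = x * (-3 * t) ^ (-(1 / 3 : ℝ)) + y ^ 2 * (-3 * t) ^ (-(4 / 3 : ℝ)))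
    (p r : ℝ → ℝ → ℝ → ℝ)
    (hp : ∀ t : ℝ, t < 0 → ∀ y x : ℝ, p t y x
        = α * (-3 * t) ^ (-(1 / 3 : ℝ)) * Real.exp (-(x * y) / (3 * t) + 2 * y ^ 3 / (27 * t ^ 2))
            * w (ξ x y t))
    (hr : ∀ t : ℝ, t < 0 → ∀ y x : ℝ, r t y x
        = -α⁻¹ * (-3 * t) ^ (-(1 / 3 : ℝ)) * Real.exp ((x * y) / (3 * t) - 2 * y ^ 3 / (27 * t ^ 2))
            * w (ξ x y t)) :
    ∀ t : ℝ, t < 0 → ∀ y x : ℝ,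
      deriv (fun t' => p t' y x) t
          = deriv (fun x1 => deriv (fun x2 => deriv (fun x3 => p t y x3) x2) x1) x
            + 6 * p t y x * r t y x * deriv (fun x' => p t y x') x
      ∧ deriv (fun t' => r t' y x) t
          = deriv (fun x1 => deriv (fun x2 => deriv (fun x3 => r t y x3) x2) x1) x
            + 6 * r t y x * p t y x * deriv (fun x' => r t y x') x := by
  have hw : ∀ s, HasDerivAt w (deriv w s) s := fun s => (hw1 s).hasDerivAt
  have hw' : ∀ s : ℝ, HasDerivAt (deriv w) (s * w s + 2 * (w s) ^ 3) s := by
    intro s; have h := (hw2 s).hasDerivAt; rwa [hPII s] at h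
  have hw'' : ∀ s : ℝ, HasDerivAt (fun s => s * w s + 2 * (w s) ^ 3)
      (w s + s * deriv w s + 6 * (w s) ^ 2 * deriv w s) s := by
    intro s
    have h1 : HasDerivAt (fun s : ℝ => s * w s) (1 * w s + s * deriv w s) s :=
      (hasDerivAt_id s).mul (hw s)
    have h2 : HasDerivAt (fun s : ℝ => (w s) ^ 3) (3 * (w s) ^ 2 * deriv w s) s := by
      simpa using (hw s).fun_pow 3
    refine (h1.add (h2.const_mul 2)).congr_deriv ?_
    ring
  intro t ht y x
  have ht0 : t ≠ 0 := ht.ne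
  have hu : (0 : ℝ) < -3 * t := by linarith
  set cc : ℝ := (-3 * t) ^ (-(1 / 3 : ℝ)) with hcc
  have h3t : cc ^ 3 = (-3 * t)⁻¹ := by rw [hcc]; exact (rpow_facts t ht).1
  have h4t : (-3 * t) ^ (-(4 / 3 : ℝ)) = cc ^ 4 := by rw [hcc]; exact (rpow_facts t ht).2
  have h6t : cc ^ 6 = ((-3 * t)⁻¹) ^ 2 := by rw [← h3t]; ring
  -- derivative of t' ↦ (-3 t')^(-1/3)
  have hcder : HasDerivAt (fun t' : ℝ => (-3 * t') ^ (-(1 / 3 : ℝ))) (cc ^ 4) t := by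
    have hlin : HasDerivAt (fun t' : ℝ => -3 * t') (-3) t := by
      simpa using (hasDerivAt_id t).const_mul (-3 : ℝ)
    have h := (Real.hasDerivAt_rpow_const (x := -3 * t) (p := -(1 / 3 : ℝ))
      (Or.inl hu.ne')).comp t hlin
    refine h.congr_deriv ?_
    have h4 : (-3 * t) ^ (-(1 / 3 : ℝ) - 1) = cc ^ 4 := by
      rw [show (-(1 / 3 : ℝ) - 1) = -(4 / 3 : ℝ) by norm_num]
      exact h4t
    rw [h4]; ring
  -- canonical x-form of p and r
  have hpfun : (fun x' => p t y x')
      = fun x' => α * cc * Real.exp (y * cc ^ 3 * x' + 2 / 3 * y ^ 3 * cc ^ 6)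
          * w (cc * x' + y ^ 2 * cc ^ 4) := by
    funext x'
    rw [hp t ht y x', hξ x' y t, ← hcc, h4t]
    have e : -(x' * y) / (3 * t) + 2 * y ^ 3 / (27 * t ^ 2)
        = y * cc ^ 3 * x' + 2 / 3 * y ^ 3 * cc ^ 6 := by
      rw [h3t, h6t]; field_simp; ring
    rw [e, show x' * cc = cc * x' from mul_comm _ _]
  have hrfun : (fun x' => r t y x')
      = fun x' => -α⁻¹ * cc * Real.exp (-(y * cc ^ 3) * x' + -(2 / 3 * y ^ 3 * cc ^ 6))
          * w (cc * x' + y ^ 2 * cc ^ 4) := by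
    funext x'
    rw [hr t ht y x', hξ x' y t, ← hcc, h4t]
    have e : (x' * y) / (3 * t) - 2 * y ^ 3 / (27 * t ^ 2)
        = -(y * cc ^ 3) * x' + -(2 / 3 * y ^ 3 * cc ^ 6) := by
      rw [h3t, h6t]; field_simp; ring
    rw [e, show x' * cc = cc * x' from mul_comm _ _]
  -- time derivative of p
  have hpt : (fun t' => p t' y x) =ᶠ[nhds t]
      (fun t' => α * ((-3 * t') ^ (-(1 / 3 : ℝ)))
        * Real.exp (x * y * ((-3 * t') ^ (-(1 / 3 : ℝ))) ^ 3
            + 2 / 3 * y ^ 3 * ((-3 * t') ^ (-(1 / 3 : ℝ))) ^ 6)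
        * w (x * ((-3 * t') ^ (-(1 / 3 : ℝ))) + y ^ 2 * ((-3 * t') ^ (-(1 / 3 : ℝ))) ^ 4)) := by
    filter_upwards [Iio_mem_nhds ht] with t' ht'
    have h3 := (rpow_facts t' ht').1
    have h4 := (rpow_facts t' ht').2
    have h6 : ((-3 * t') ^ (-(1 / 3 : ℝ))) ^ 6 = ((-3 * t')⁻¹) ^ 2 := by rw [← h3]; ring
    have ht'0 : t' ≠ 0 := ne_of_lt ht'
    rw [hp t' ht' y x, hξ x y t', h4]
    have e : -(x * y) / (3 * t') + 2 * y ^ 3 / (27 * t' ^ 2)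
        = x * y * ((-3 * t') ^ (-(1 / 3 : ℝ))) ^ 3
            + 2 / 3 * y ^ 3 * ((-3 * t') ^ (-(1 / 3 : ℝ))) ^ 6 := by
      rw [h3, h6]; field_simp; ring
    rw [e]
  have hrt : (fun t' => r t' y x) =ᶠ[nhds t]
      (fun t' => -α⁻¹ * ((-3 * t') ^ (-(1 / 3 : ℝ)))
        * Real.exp (-(x * y) * ((-3 * t') ^ (-(1 / 3 : ℝ))) ^ 3
            + -(2 / 3 * y ^ 3) * ((-3 * t') ^ (-(1 / 3 : ℝ))) ^ 6)
        * w (x * ((-3 * t') ^ (-(1 / 3 : ℝ))) + y ^ 2 * ((-3 * t') ^ (-(1 / 3 : ℝ))) ^ 4)) := by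
    filter_upwards [Iio_mem_nhds ht] with t' ht'
    have h3 := (rpow_facts t' ht').1
    have h4 := (rpow_facts t' ht').2
    have h6 : ((-3 * t') ^ (-(1 / 3 : ℝ))) ^ 6 = ((-3 * t')⁻¹) ^ 2 := by rw [← h3]; ring
    have ht'0 : t' ≠ 0 := ne_of_lt ht'
    rw [hr t' ht' y x, hξ x y t', h4]
    have e : (x * y) / (3 * t') - 2 * y ^ 3 / (27 * t' ^ 2)
        = -(x * y) * ((-3 * t') ^ (-(1 / 3 : ℝ))) ^ 3
            + -(2 / 3 * y ^ 3) * ((-3 * t') ^ (-(1 / 3 : ℝ))) ^ 6 := by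
      rw [h3, h6]; field_simp; ring
    rw [e]
  have hdp : deriv (fun t' => p t' y x) t
      = (α * Real.exp (x * y * cc ^ 3 + 2 / 3 * y ^ 3 * cc ^ 6) *
          ((1 + 3 * (x * y) * cc ^ 3 + 6 * (2 / 3 * y ^ 3) * cc ^ 6) * w (x * cc + y ^ 2 * cc ^ 4)
            + (x * cc + 4 * y ^ 2 * cc ^ 4) * deriv w (x * cc + y ^ 2 * cc ^ 4))) * cc ^ 4 := by
    rw [hpt.deriv_eq]
    have h := (hasDerivAt_G w (deriv w) hw α (x * y) (2 / 3 * y ^ 3) x (y ^ 2) cc).comp t hcder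
    exact h.deriv
  have hdr : deriv (fun t' => r t' y x) t
      = (-α⁻¹ * Real.exp (-(x * y) * cc ^ 3 + -(2 / 3 * y ^ 3) * cc ^ 6) *
          ((1 + 3 * (-(x * y)) * cc ^ 3 + 6 * (-(2 / 3 * y ^ 3)) * cc ^ 6) * w (x * cc + y ^ 2 * cc ^ 4)
            + (x * cc + 4 * y ^ 2 * cc ^ 4) * deriv w (x * cc + y ^ 2 * cc ^ 4))) * cc ^ 4 := by
    rw [hrt.deriv_eq]
    have h := (hasDerivAt_G w (deriv w) hw (-α⁻¹) (-(x * y)) (-(2 / 3 * y ^ 3)) x (y ^ 2) cc).comp t hcder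
    exact h.deriv
  have hpx : p t y x = α * cc * Real.exp (y * cc ^ 3 * x + 2 / 3 * y ^ 3 * cc ^ 6)
      * w (cc * x + y ^ 2 * cc ^ 4) := congrFun hpfun x
  have hrx : r t y x = -α⁻¹ * cc * Real.exp (-(y * cc ^ 3) * x + -(2 / 3 * y ^ 3 * cc ^ 6))
      * w (cc * x + y ^ 2 * cc ^ 4) := congrFun hrfun x
  have hEne : Real.exp (x * y * cc ^ 3 + 2 / 3 * y ^ 3 * cc ^ 6) ≠ 0 := Real.exp_ne_zero _
  constructor
  · rw [hdp, hpfun,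
      aux_third w (deriv w) (fun s => s * w s + 2 * (w s) ^ 3)
        (fun s => w s + s * deriv w s + 6 * (w s) ^ 2 * deriv w s) hw hw' hw''
        (α * cc) (y * cc ^ 3) cc (y ^ 2 * cc ^ 4) (2 / 3 * y ^ 3 * cc ^ 6) x,
      (aux_T w (deriv w) hw (α * cc) (y * cc ^ 3) cc (y ^ 2 * cc ^ 4)
        (2 / 3 * y ^ 3 * cc ^ 6) x).deriv,
      hpx, hrx]

    rw [show y * cc ^ 3 * x + 2 / 3 * y ^ 3 * cc ^ 6
        = x * y * cc ^ 3 + 2 / 3 * y ^ 3 * cc ^ 6 from by ring,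
      show -(y * cc ^ 3) * x + -(2 / 3 * y ^ 3 * cc ^ 6)
        = -(x * y * cc ^ 3 + 2 / 3 * y ^ 3 * cc ^ 6) from by ring,
      Real.exp_neg,
      show cc * x + y ^ 2 * cc ^ 4 = x * cc + y ^ 2 * cc ^ 4 from by ring]
    field_simp
    ring
  · rw [hdr, hrfun,
      aux_third w (deriv w) (fun s => s * w s + 2 * (w s) ^ 3)
        (fun s => w s + s * deriv w s + 6 * (w s) ^ 2 * deriv w s) hw hw' hw''
        (-α⁻¹ * cc) (-(y * cc ^ 3)) cc (y ^ 2 * cc ^ 4) (-(2 / 3 * y ^ 3 * cc ^ 6)) x,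
      (aux_T w (deriv w) hw (-α⁻¹ * cc) (-(y * cc ^ 3)) cc (y ^ 2 * cc ^ 4)
        (-(2 / 3 * y ^ 3 * cc ^ 6)) x).deriv,
      hpx, hrx]

    rw [show y * cc ^ 3 * x + 2 / 3 * y ^ 3 * cc ^ 6
        = x * y * cc ^ 3 + 2 / 3 * y ^ 3 * cc ^ 6 from by ring,
      show -(y * cc ^ 3) * x + -(2 / 3 * y ^ 3 * cc ^ 6)
        = -(x * y * cc ^ 3 + 2 / 3 * y ^ 3 * cc ^ 6) from by ring,
      Real.exp_neg,
      show -(x * y) * cc ^ 3 + -(2 / 3 * y ^ 3) * cc ^ 6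
        = -(x * y * cc ^ 3 + 2 / 3 * y ^ 3 * cc ^ 6) from by ring,
      Real.exp_neg,
      show cc * x + y ^ 2 * cc ^ 4 = x * cc + y ^ 2 * cc ^ 4 from by ring]
    field_simp
    ring
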